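/- In the deductive system CL2, the formula ⊓x⊔y (p(x) ∨ ¬p(y)) is provable, while the formula ⊔y⊓x (p(x) ∨ ¬p(y)) is not provable (p a unary predicate letter). -/

import Mathlib

/-- Terms of the language: variables and constants (both indexed by naturals). -/
inductive Term where
  | var : ℕ → Term
  | const : ℕ → Term
deriving DecidableEq

/-- Formulas of the language of CL2: the logical atoms ⊤,⊥, non-logical atoms
p(t₁,…,tₙ), the classical connectives ¬,∧,∨,→, the blind quantifiers ∀x,∃x, the
choice connectives ⊓,⊔ and the choice quantifiers ⊓x,⊔x. -/
inductive Fml where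
  | top : Fml
  | bot : Fml
  | atom : ℕ → List Term → Fml
  | neg : Fml → Fml
  | and : Fml → Fml → Fml
  | or : Fml → Fml → Fml
  | imp : Fml → Fml → Fml
  | all : ℕ → Fml → Fml
  | ex : ℕ → Fml → Fml
  | chand : Fml → Fml → Fml
  | chor : Fml → Fml → Fml
  | chall : ℕ → Fml → Fml
  | chex : ℕ → Fml → Fml

/-- Substitution of the term u for the variable x in a term. -/
def Term.subst (t : Term) (x : ℕ) (u : Term) : Term :=
  match t with
  | .var y => if y = x then u else .var y
  | .const c => .const c

/-- Substitution of the term u for all free occurrences of the variable x. -/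
def Fml.subst : Fml → ℕ → Term → Fml
  | .top, _, _ => .top
  | .bot, _, _ => .bot
  | .atom p args, x, u => .atom p (args.map fun t => t.subst x u)
  | .neg F, x, u => .neg (F.subst x u)
  | .and F G, x, u => .and (F.subst x u) (G.subst x u)
  | .or F G, x, u => .or (F.subst x u) (G.subst x u)
  | .imp F G, x, u => .imp (F.subst x u) (G.subst x u)
  | .all y F, x, u => if y = x then .all y F else .all y (F.subst x u)
  | .ex y F, x, u => if y = x then .ex y F else .ex y (F.subst x u)
  | .chand F G, x, u => .chand (F.subst x u) (G.subst x u)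
  | .chor F G, x, u => .chor (F.subst x u) (G.subst x u)
  | .chall y F, x, u => if y = x then .chall y F else .chall y (F.subst x u)
  | .chex y F, x, u => if y = x then .chex y F else .chex y (F.subst x u)

/-- Elementarization, relative to a sign (true = positive occurrence): positive
surface occurrences of ⊔-type subformulas become ⊥ and of ⊓-type become ⊤, and
dually for negative occurrences; → is read as flipping the sign of its
antecedent. -/
def Fml.elzAux : Bool → Fml → Fml
  | _, .top => .top
  | _, .bot => .bot
  | _, .atom p args => .atom p args
  | s, .neg F => .neg (Fml.elzAux (!s) F)
  | s, .and F G => .and (Fml.elzAux s F) (Fml.elzAux s G)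
  | s, .or F G => .or (Fml.elzAux s F) (Fml.elzAux s G)
  | s, .imp F G => .imp (Fml.elzAux (!s) F) (Fml.elzAux s G)
  | s, .all x F => .all x (Fml.elzAux s F)
  | s, .ex x F => .ex x (Fml.elzAux s F)
  | s, .chand _ _ => if s then .top else .bot
  | s, .chor _ _ => if s then .bot else .top
  | s, .chall _ _ => if s then .top else .bot
  | s, .chex _ _ => if s then .bot else .top

/-- The elementarization ‖F‖ of a formula F. -/
def Fml.elz (F : Fml) : Fml := Fml.elzAux true F

/-- The value of a term under a valuation (constants denote themselves). -/
def Term.val (v : ℕ → ℕ) : Term → ℕ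
  | .var x => v x
  | .const c => c

/-- Classical satisfaction of a formula, in the model with domain the constants
{0,1,2,…}, where I interprets the predicate letters and v the variables.
(Used only on elementary formulas; choice operators are read classically.) -/
def Fml.sat (I : ℕ → List ℕ → Prop) : (ℕ → ℕ) → Fml → Prop
  | _, .top => True
  | _, .bot => False
  | v, .atom p args => I p (args.map (Term.val v))
  | v, .neg F => ¬ Fml.sat I v F
  | v, .and F G => Fml.sat I v F ∧ Fml.sat I v G
  | v, .or F G => Fml.sat I v F ∨ Fml.sat I v G
  | v, .imp F G => Fml.sat I v F → Fml.sat I v G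
  | v, .all x F => ∀ c : ℕ, Fml.sat I (Function.update v x c) F
  | v, .ex x F => ∃ c : ℕ, Fml.sat I (Function.update v x c) F
  | v, .chand F G => Fml.sat I v F ∧ Fml.sat I v G
  | v, .chor F G => Fml.sat I v F ∨ Fml.sat I v G
  | v, .chall x F => ∀ c : ℕ, Fml.sat I (Function.update v x c) F
  | v, .chex x F => ∃ c : ℕ, Fml.sat I (Function.update v x c) F

/-- Classical validity (constants read as free variables, i.e. true under every
interpretation of the predicate letters and every valuation). -/
def Fml.Valid (F : Fml) : Prop := ∀ (I : ℕ → List ℕ → Prop) (v : ℕ → ℕ), F.sat I v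

/-- A formula is stable iff its elementarization is classically valid. -/
def Fml.Stable (F : Fml) : Prop := F.elz.Valid

/-- Variables occurring in a term. -/
def Term.vars : Term → Finset ℕ
  | .var x => {x}
  | .const _ => ∅

/-- All variables occurring (free or bound) in a formula. -/
def Fml.vars : Fml → Finset ℕ
  | .top => ∅
  | .bot => ∅
  | .atom _ args => args.foldr (fun t s => t.vars ∪ s) ∅
  | .neg F => F.vars
  | .and F G | .or F G | .imp F G | .chand F G | .chor F G => F.vars ∪ G.vars
  | .all x F | .ex x F | .chall x F | .chex x F => insert x F.vars

/-- The free variables of a formula. -/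
def Fml.freeVars : Fml → Finset ℕ
  | .top => ∅
  | .bot => ∅
  | .atom _ args => args.foldr (fun t s => t.vars ∪ s) ∅
  | .neg F => F.freeVars
  | .and F G | .or F G | .imp F G | .chand F G | .chor F G => F.freeVars ∪ G.freeVars
  | .all x F | .ex x F | .chall x F | .chex x F => F.freeVars.erase x

/-- `F.capturesAt x v` : some free occurrence of the variable x in F lies in
the scope of a quantifier (∀, ∃, ⊓ or ⊔) binding the variable v. -/
def Fml.capturesAt : Fml → ℕ → ℕ → Prop
  | .top, _, _ => False
  | .bot, _, _ => False
  | .atom _ _, _, _ => False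
  | .neg F, x, v => F.capturesAt x v
  | .and F G, x, v | .or F G, x, v | .imp F G, x, v
  | .chand F G, x, v | .chor F G, x, v => F.capturesAt x v ∨ G.capturesAt x v
  | .all y F, x, v | .ex y F, x, v | .chall y F, x, v | .chex y F, x, v =>
      x ≠ y ∧ ((y = v ∧ x ∈ F.freeVars) ∨ F.capturesAt x v)

/-- A path addressing a surface occurrence in a formula (surface = not in the
scope of any choice operator, so paths do not descend through ⊓,⊔,⊓x,⊔x). -/
inductive FPath where
  | here : FPath
  | negP : FPath → FPath
  | andL : FPath → FPath
  | andR : FPath → FPath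
  | orL : FPath → FPath
  | orR : FPath → FPath
  | impL : FPath → FPath
  | impR : FPath → FPath
  | allP : FPath → FPath
  | exP : FPath → FPath

/-- The subformula of F at a surface path, together with its sign (true =
positive, i.e. in the scope of an even number of negations, reading G → H as
¬G ∨ H) and the set of variables bound by blind quantifiers on the path. -/
def Fml.subAt : Fml → FPath → Option (Bool × Finset ℕ × Fml)
  | F, .here => some (true, ∅, F)
  | .neg F, .negP π => (F.subAt π).map fun r => (!r.1, r.2.1, r.2.2)
  | .and F _, .andL π => F.subAt π
  | .and _ G, .andR π => G.subAt π
  | .or F _, .orL π => F.subAt π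
  | .or _ G, .orR π => G.subAt π
  | .imp F _, .impL π => (F.subAt π).map fun r => (!r.1, r.2.1, r.2.2)
  | .imp _ G, .impR π => G.subAt π
  | .all x F, .allP π => (F.subAt π).map fun r => (r.1, insert x r.2.1, r.2.2)
  | .ex x F, .exP π => (F.subAt π).map fun r => (r.1, insert x r.2.1, r.2.2)
  | _, _ => none

/-- The result of replacing the subformula at a surface path by H. -/
def Fml.replaceAt : Fml → FPath → Fml → Option Fml
  | _, .here, H => some H
  | .neg F, .negP π, H => (F.replaceAt π H).map Fml.neg
  | .and F G, .andL π, H => (F.replaceAt π H).map fun F' => .and F' G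
  | .and F G, .andR π, H => (G.replaceAt π H).map fun G' => .and F G'
  | .or F G, .orL π, H => (F.replaceAt π H).map fun F' => .or F' G
  | .or F G, .orR π, H => (G.replaceAt π H).map fun G' => .or F G'
  | .imp F G, .impL π, H => (F.replaceAt π H).map fun F' => .imp F' G
  | .imp F G, .impR π, H => (G.replaceAt π H).map fun G' => .imp F G'
  | .all x F, .allP π, H => (F.replaceAt π H).map (Fml.all x)
  | .ex x F, .exP π, H => (F.replaceAt π H).map (Fml.ex x)
  | _, _, _ => none

/-- Provability in CL2, given by Rules A, B1 and B2. In Rule A, `ych` chooses,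
for each positive surface occurrence of a ⊓-quantified subformula (resp.
negative occurrence of a ⊔-quantified one), some variable not occurring in F. -/
inductive Prov : Fml → Prop where
  | ruleA (F : Fml) (hst : F.Stable) (ych : FPath → ℕ)
      (hfresh : ∀ π : FPath, ych π ∉ F.vars)
      (hcon : ∀ (π : FPath) (b : Finset ℕ) (G₁ G₂ : Fml),
        (F.subAt π = some (true, b, .chand G₁ G₂) ∨
         F.subAt π = some (false, b, .chor G₁ G₂)) →
        ∀ G : Fml, (G = G₁ ∨ G = G₂) →
        ∀ H : Fml, F.replaceAt π G = some H → Prov H)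
      (hqu : ∀ (π : FPath) (b : Finset ℕ) (x : ℕ) (G : Fml),
        (F.subAt π = some (true, b, .chall x G) ∨
         F.subAt π = some (false, b, .chex x G)) →
        ∀ H : Fml, F.replaceAt π (G.subst x (.var (ych π))) = some H → Prov H) :
      Prov F
  | ruleB1 (F F' : Fml) (π : FPath) (b : Finset ℕ) (G₁ G₂ G : Fml)
      (hocc : F.subAt π = some (false, b, .chand G₁ G₂) ∨
              F.subAt π = some (true, b, .chor G₁ G₂))
      (hG : G = G₁ ∨ G = G₂)
      (hrep : F.replaceAt π G = some F')
      (hprem : Prov F') : Prov F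
  | ruleB2 (F F' : Fml) (π : FPath) (b : Finset ℕ) (x : ℕ) (G : Fml) (t : Term)
      (hocc : F.subAt π = some (false, b, .chall x G) ∨
              F.subAt π = some (true, b, .chex x G))
      (hside : ∀ v : ℕ, t = .var v → v ∉ b ∧ ¬ G.capturesAt x v)
      (hrep : F.replaceAt π (G.subst x t) = some F')
      (hprem : Prov F') : Prov F

/-- Elementary formulas: no choice operators at all. -/
def Fml.Elem : Fml → Prop
  | .top => True
  | .bot => True
  | .atom _ _ => True
  | .neg F => F.Elem
  | .and F G | .or F G | .imp F G => F.Elem ∧ G.Elem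
  | .all _ F | .ex _ F => F.Elem
  | .chand _ _ | .chor _ _ | .chall _ _ | .chex _ _ => False

theorem subAt_elem : ∀ (π : FPath) (F : Fml) (s : Bool) (b : Finset ℕ) (G : Fml),
    F.Elem → F.subAt π = some (s, b, G) → G.Elem := by
  intro π
  induction π with
  | here =>
      intro F s b G hF h
      simp [Fml.subAt] at h
      rw [← h.2.2]; exact hF
  | negP π ih =>
      intro F s b G hF h
      cases F <;> simp [Fml.subAt, Option.map_eq_some_iff] at h
      refine ih _ _ _ _ ?_ h
      exact hF
  | andL π ih =>
      intro F s b G hF h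
      cases F <;> simp [Fml.subAt] at h
      exact ih _ _ _ _ hF.1 h
  | andR π ih =>
      intro F s b G hF h
      cases F <;> simp [Fml.subAt] at h
      exact ih _ _ _ _ hF.2 h
  | orL π ih =>
      intro F s b G hF h
      cases F <;> simp [Fml.subAt] at h
      exact ih _ _ _ _ hF.1 h
  | orR π ih =>
      intro F s b G hF h
      cases F <;> simp [Fml.subAt] at h
      exact ih _ _ _ _ hF.2 h
  | impL π ih =>
      intro F s b G hF h
      cases F <;> simp [Fml.subAt, Option.map_eq_some_iff] at h
      refine ih _ _ _ _ ?_ h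
      exact hF.1
  | impR π ih =>
      intro F s b G hF h
      cases F <;> simp [Fml.subAt] at h
      exact ih _ _ _ _ hF.2 h
  | allP π ih =>
      intro F s b G hF h
      cases F <;> simp [Fml.subAt, Option.map_eq_some_iff] at h
      rcases h with ⟨b', h1, -, -⟩ | ⟨b', h1, -, -⟩ <;>
        · refine ih _ _ _ _ ?_ h1
          exact hF
  | exP π ih =>
      intro F s b G hF h
      cases F <;> simp [Fml.subAt, Option.map_eq_some_iff] at h
      rcases h with ⟨b', h1, -, -⟩ | ⟨b', h1, -, -⟩ <;>
        · refine ih _ _ _ _ ?_ h1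
          exact hF

theorem elzAux_elem : ∀ (F : Fml), F.Elem → ∀ s : Bool, Fml.elzAux s F = F := by
  intro F
  induction F with
  | top => intro _ _; rfl
  | bot => intro _ _; rfl
  | atom p l => intro _ _; rfl
  | neg F ih => intro hE s; simp [Fml.elzAux, ih hE]
  | and F G ihF ihG => intro hE s; simp [Fml.elzAux, ihF hE.1, ihG hE.2]
  | or F G ihF ihG => intro hE s; simp [Fml.elzAux, ihF hE.1, ihG hE.2]
  | imp F G ihF ihG => intro hE s; simp [Fml.elzAux, ihF hE.1, ihG hE.2]
  | all x F ih => intro hE s; simp [Fml.elzAux, ih hE]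
  | ex x F ih => intro hE s; simp [Fml.elzAux, ih hE]
  | chand F G _ _ => intro hE _; exact absurd hE id
  | chor F G _ _ => intro hE _; exact absurd hE id
  | chall x F _ => intro hE _; exact absurd hE id
  | chex x F _ => intro hE _; exact absurd hE id

/-- An elementary, classically non-valid formula is not provable. -/
theorem not_prov_of_elem (H : Fml) (hE : H.Elem) (hnv : ¬ H.Valid) : ¬ Prov H := by
  intro h
  cases h with
  | ruleA F hst ych hfresh hcon hqu =>
      apply hnv
      have h2 : H.elz = H := elzAux_elem H hE true
      rwa [Fml.Stable, h2] at hst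
  | ruleB1 F F' π b G₁ G₂ G hocc hG hrep hprem =>
      rcases hocc with h | h <;> exact subAt_elem π _ _ _ _ hE h
  | ruleB2 F F' π b x G t hocc hside hrep hprem =>
      rcases hocc with h | h <;> exact subAt_elem π _ _ _ _ hE h

/-- p(y) ∨ ¬p(t) is not classically valid when t ≠ y. -/
theorem not_valid_key (y : ℕ) (t : Term) (hne : t ≠ .var y) :
    ¬ Fml.Valid (.or (.atom 0 [.var y]) (.neg (.atom 0 [t]))) := by
  intro h
  obtain ⟨v, hval⟩ : ∃ v : ℕ → ℕ, t.val v ≠ v y := by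
    cases t with
    | var w =>
        have hwy : w ≠ y := fun hc => hne (by rw [hc])
        exact ⟨fun n => if n = y then 1 else 0, by simp [Term.val, hwy]⟩
    | const c => exact ⟨fun _ => c + 1, by simp [Term.val]⟩
  have h2 : ([v y] = [Term.val v t]) ∨ ¬ ([Term.val v t] = [Term.val v t]) :=
    h (fun _ l => l = [Term.val v t]) v
  rcases h2 with h1 | h1
  · exact hval (List.cons.inj h1).1.symm
  · exact h1 rfl

theorem not_prov_key (y : ℕ) (t : Term) (hne : t ≠ .var y) :
    ¬ Prov (.or (.atom 0 [.var y]) (.neg (.atom 0 [t]))) :=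
  not_prov_of_elem _ (by constructor <;> trivial) (not_valid_key y t hne)

theorem not_prov_F2 (t : Term) (ht : ∀ v : ℕ, t = .var v → v ≠ 0) :
    ¬ Prov (.chall 0 (.or (.atom 0 [.var 0]) (.neg (.atom 0 [t])))) := by
  intro h
  cases h with
  | ruleA F hst ych hfresh hcon hqu =>
      set y := ych .here with hy
      have hfr : y ∉ Fml.vars (.chall 0 (.or (.atom 0 [.var 0]) (.neg (.atom 0 [t])))) :=
        hfresh .here
      have hty : t ≠ .var y := by
        intro hc
        apply hfr
        subst hc
        simp [Fml.vars, Term.vars]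
      have hsub : t.subst 0 (.var y) = t := by
        cases t with
        | var w => simp [Term.subst, ht w rfl]
        | const c => rfl
      have hprov := hqu .here ∅ 0 (.or (.atom 0 [.var 0]) (.neg (.atom 0 [t])))
        (Or.inl rfl) _ rfl
      apply not_prov_key y t hty
      have hgoal : Prov (.or (.atom 0 [.var y]) (.neg (.atom 0 [t.subst 0 (.var y)]))) :=
        hprov
      rwa [hsub] at hgoal
  | ruleB1 F F' π b G₁ G₂ G hocc hG hrep hprem =>
      cases π <;> simp [Fml.subAt] at hocc
  | ruleB2 F F' π b x G t' hocc hside hrep hprem =>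
      cases π <;> simp [Fml.subAt] at hocc

/-- CL2 proves ⊓x⊔y (p(x) ∨ ¬p(y)) but does not prove
⊔y⊓x (p(x) ∨ ¬p(y)) (p a unary predicate letter; x = var 0, y = var 1). -/
theorem prov_chall_chex_not_chex_chall :
    Prov (.chall 0 (.chex 1 (.or (.atom 0 [.var 0]) (.neg (.atom 0 [.var 1]))))) ∧
    ¬ Prov (.chex 1 (.chall 0 (.or (.atom 0 [.var 0]) (.neg (.atom 0 [.var 1]))))) := by
  have hE : Fml.Elem (.or (.atom 0 [.var 2]) (.neg (.atom 0 [.var 2]))) := ⟨trivial, trivial⟩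
  have prov_em : Prov (.or (.atom 0 [.var 2]) (.neg (.atom 0 [.var 2]))) := by
    apply Prov.ruleA _ ?_ (fun _ => 3) ?_ ?_ ?_
    · intro I v
      exact Classical.em _
    · intro π
      exact (by decide : (3:ℕ) ∉ Fml.vars (.or (.atom 0 [.var 2]) (.neg (.atom 0 [.var 2]))))
    · intro π b G₁ G₂ hocc G hG H hrep
      rcases hocc with h | h <;> exact False.elim (subAt_elem π _ _ _ _ hE h)
    · intro π b x G hocc H hrep
      rcases hocc with h | h <;> exact False.elim (subAt_elem π _ _ _ _ hE h)
  have prov_inner : Prov (.chex 1 (.or (.atom 0 [.var 2]) (.neg (.atom 0 [.var 1])))) := by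
    refine Prov.ruleB2 (.chex 1 (.or (.atom 0 [.var 2]) (.neg (.atom 0 [.var 1]))))
      (.or (.atom 0 [.var 2]) (.neg (.atom 0 [.var 2]))) .here ∅ 1
      (.or (.atom 0 [.var 2]) (.neg (.atom 0 [.var 1])))
      (.var 2) (Or.inr rfl) ?_ rfl prov_em
    intro v hv
    cases hv
    exact ⟨by simp, by simp [Fml.capturesAt]⟩
  constructor
  · apply Prov.ruleA _ ?_ (fun _ => 2) ?_ ?_ ?_
    · intro I v
      trivial
    · intro π
      exact (by decide : (2:ℕ) ∉ Fml.vars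
        (.chall 0 (.chex 1 (.or (.atom 0 [.var 0]) (.neg (.atom 0 [.var 1]))))))
    · intro π b G₁ G₂ hocc G hG H hrep
      cases π <;> simp [Fml.subAt] at hocc
    · intro π b x G hocc H hrep
      cases π <;> simp [Fml.subAt] at hocc
      obtain ⟨hb, hx, hG⟩ := hocc
      cases hx
      cases hG
      cases Option.some.inj hrep
      exact prov_inner
  · intro h
    cases h with
    | ruleA F hst ych hfresh hcon hqu =>
        exact hst (fun _ _ => True) id
    | ruleB1 F F' π b G₁ G₂ G hocc hG hrep hprem =>
        cases π <;> simp [Fml.subAt] at hocc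
    | ruleB2 F F' π b x G t hocc hside hrep hprem =>
        cases π <;> simp [Fml.subAt] at hocc
        obtain ⟨hb, hx, hG⟩ := hocc
        subst hb
        cases hx
        cases hG
        cases Option.some.inj hrep
        refine not_prov_F2 t ?_ hprem
        intro v hv hv0
        apply (hside v hv).2
        rw [hv0]
        refine ⟨by decide, Or.inl ⟨rfl, ?_⟩⟩
        simp [Fml.freeVars, Term.vars]
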